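/- Let C ⊂ P^2 be the quartic curve defined by (x_0x_2 + x_1^2)^2 − x_0^4 = 0. Then the subgroup of PGL_3(k) preserving C consists exactly of the transformations (x_0 : x_1 : x_2) ↦ (ζ^2 x_0 : ζx_1 − (ζa/2)x_0 : x_2 + a x_1 − (a^2/4)x_0) with ζ^4 = 1 and a ∈ k; in particular this group is isomorphic to Ga ⋊ μ_4 and its identity component is isomorphic to Ga. -/

import Mathlib

open Matrix

/-- The quartic form `(x₀x₂ + x₁²)² − x₀⁴` defining the curve `C ⊂ ℙ²`. -/
def quarticC {k : Type*} [Field k] (v : Fin 3 → k) : k :=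
  (v 0 * v 2 + v 1 ^ 2) ^ 2 - v 0 ^ 4

/-- `g ∈ GL₃(k)` preserves the plane curve with (homogeneous) equation `F = 0` iff the
linear action of `g` on `k³` maps the affine cone over the curve onto itself. This is the
condition that the induced element of `PGL₃(k)` maps the curve to itself. -/
def PreservesPlaneCurve {k : Type*} [Field k] (F : (Fin 3 → k) → k)
    (g : GL (Fin 3) k) : Prop :=
  ∀ v : Fin 3 → k, F ((g : Matrix (Fin 3) (Fin 3) k).mulVec v) = 0 ↔ F v = 0

/-- The matrix of the transformation
`(x₀:x₁:x₂) ↦ (ζ²x₀ : ζx₁ − (ζa/2)x₀ : x₂ + ax₁ − (a²/4)x₀)`. -/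
def quarticAut {k : Type*} [Field k] (ζ a : k) : Matrix (Fin 3) (Fin 3) k :=
  !![ζ ^ 2, 0, 0; -(ζ * a / 2), ζ, 0; -(a ^ 2 / 4), a, 1]

lemma vanish5 {k : Type*} [Field k] [CharZero k] (c0 c1 c2 c3 c4 : k)
    (h : ∀ t : k, c0 + c1*t + c2*t^2 + c3*t^3 + c4*t^4 = 0) :
    c0 = 0 ∧ c1 = 0 ∧ c2 = 0 ∧ c3 = 0 ∧ c4 = 0 := by
  have h0 := h 0; have h1 := h 1; have h2 := h (-1); have h3 := h 2; have h4 := h (-2)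
  refine ⟨by linear_combination h0, by linear_combination (8*h1 - 8*h2 - h3 + h4)/12,
    by linear_combination (16*h1 + 16*h2 - 30*h0 - h3 - h4)/24,
    by linear_combination (h3 - h4 - 2*h1 + 2*h2)/12,
    by linear_combination (h3 + h4 - 4*h1 - 4*h2 + 6*h0)/24⟩

lemma key5 {k : Type*} [Field k] [CharZero k] (c0 c1 c2 c3 c4 d0 d1 d2 d3 d4 : k)
    (h : ∀ t : k, (c0 + c1*t + c2*t^2 + c3*t^3 + c4*t^4)
        * (d0 + d1*t + d2*t^2 + d3*t^3 + d4*t^4) = 0) :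
    (c0 = 0 ∧ c1 = 0 ∧ c2 = 0 ∧ c3 = 0 ∧ c4 = 0) ∨
    (d0 = 0 ∧ d1 = 0 ∧ d2 = 0 ∧ d3 = 0 ∧ d4 = 0) := by
  set P : Polynomial k := .C c0 + .C c1 * .X + .C c2 * .X^2 + .C c3 * .X^3 + .C c4 * .X^4
    with hP
  set Q : Polynomial k := .C d0 + .C d1 * .X + .C d2 * .X^2 + .C d3 * .X^3 + .C d4 * .X^4
    with hQ
  have hPQ : P * Q = 0 := by
    apply Polynomial.funext
    intro t
    simp only [hP, hQ, Polynomial.eval_mul, Polynomial.eval_add, Polynomial.eval_pow,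
      Polynomial.eval_C, Polynomial.eval_X, Polynomial.eval_zero]
    simpa using h t
  rcases mul_eq_zero.mp hPQ with h' | h'
  · left
    apply vanish5
    intro t
    have := congrArg (Polynomial.eval t) h'
    simpa [hP, Polynomial.eval_add, Polynomial.eval_mul, Polynomial.eval_pow] using this
  · right
    apply vanish5
    intro t
    have := congrArg (Polynomial.eval t) h'
    simpa [hQ, Polynomial.eval_add, Polynomial.eval_mul, Polynomial.eval_pow] using this

lemma degen {k : Type*} [Field k] (M N : Matrix (Fin 3) (Fin 3) k) (hMN : M * N = 1) (e : k)
    (t1 : M 0 0*M 2 0 + M 1 0^2 + e*(M 0 0^2) = 0)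
    (t2 : M 0 0*M 2 1 + M 0 1*M 2 0 + 2*M 1 0*M 1 1 + e*(2*M 0 0*M 0 1) = 0)
    (t3 : M 0 0*M 2 2 + M 0 2*M 2 0 + 2*M 1 0*M 1 2 + e*(2*M 0 0*M 0 2) = 0)
    (t4 : M 0 1*M 2 1 + M 1 1^2 + e*(M 0 1^2) = 0)
    (t5 : M 0 1*M 2 2 + M 0 2*M 2 1 + 2*M 1 1*M 1 2 + e*(2*M 0 1*M 0 2) = 0)
    (t6 : M 0 2*M 2 2 + M 1 2^2 + e*(M 0 2^2) = 0) : False := by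
  set v : Fin 3 → k := N.mulVec ![0,1,0] with hv
  have hw : M.mulVec v = ![0,1,0] := by
    rw [hv, Matrix.mulVec_mulVec, hMN, Matrix.one_mulVec]
  have e0 : M 0 0 * v 0 + M 0 1 * v 1 + M 0 2 * v 2 = 0 := by
    have := congrFun hw 0
    simpa [Matrix.mulVec, dotProduct, Fin.sum_univ_three] using this
  have e1 : M 1 0 * v 0 + M 1 1 * v 1 + M 1 2 * v 2 = 1 := by
    have := congrFun hw 1
    simpa [Matrix.mulVec, dotProduct, Fin.sum_univ_three] using this
  have e2 : M 2 0 * v 0 + M 2 1 * v 1 + M 2 2 * v 2 = 0 := by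
    have := congrFun hw 2
    simpa [Matrix.mulVec, dotProduct, Fin.sum_univ_three] using this
  have : (1:k) = 0 := by
    linear_combination (v 0^2)*t1 + (v 0*v 1)*t2 + (v 0*v 2)*t3 + (v 1^2)*t4
      + (v 1*v 2)*t5 + (v 2^2)*t6
      - (M 2 0 * v 0 + M 2 1 * v 1 + M 2 2 * v 2 + e*(M 0 0 * v 0 + M 0 1 * v 1 + M 0 2 * v 2))*e0
      - (M 1 0 * v 0 + M 1 1 * v 1 + M 1 2 * v 2 + 1)*e1
  exact one_ne_zero this

lemma recon {k : Type*} [Field k] [CharZero k] (M : Matrix (Fin 3) (Fin 3) k)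
    (hdet : M.det ≠ 0)
    (h01 : M 0 1 = 0) (h02 : M 0 2 = 0) (h12 : M 1 2 = 0)
    (h11 : M 1 1^2 = M 0 0 * M 2 2)
    (h00 : M 0 0^2 * M 0 0^2 = (M 0 0 * M 2 2)^2)
    (h20 : M 0 0*M 2 0 + M 1 0^2 = 0) (h21 : M 0 0*M 2 1 + 2*M 1 0*M 1 1 = 0) :
    ∃ (c : kˣ) (ζ a : k), ζ^4 = 1 ∧ M = (c : k) • quarticAut ζ a := by
  have hd : M.det = M 0 0 * M 1 1 * M 2 2 := by
    rw [Matrix.det_fin_three, h01, h02, h12]; ring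
  rw [hd] at hdet
  have n00 : M 0 0 ≠ 0 := fun h => hdet (by rw [h]; ring)
  have n11 : M 1 1 ≠ 0 := fun h => hdet (by rw [h]; ring)
  have n22 : M 2 2 ≠ 0 := fun h => hdet (by rw [h]; ring)
  have h00' : M 0 0^2 = M 2 2^2 :=
    mul_left_cancel₀ (pow_ne_zero 2 n00) (by linear_combination h00)
  refine ⟨Units.mk0 (M 2 2) n22, M 1 1 / M 2 2, M 2 1 / M 2 2, ?_, ?_⟩
  · field_simp
    linear_combination (M 1 1^2 + M 0 0 * M 2 2)*h11 + M 2 2^2 * h00'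
  · ext i j
    fin_cases i <;> fin_cases j <;> simp [quarticAut]
    · field_simp
      linear_combination -h11
    · exact h01
    · exact h02
    · field_simp
      have key : M 0 0 * (M 1 0 * (M 2 2 * M 2 2 * 2) - -(M 2 2 * (M 1 1 * M 2 1))) = 0 := by
        linear_combination (M 1 1 * M 2 2)*h21 - 2*M 1 0*M 2 2*h11
      have := (mul_eq_zero.mp key).resolve_left n00
      exact mul_right_cancel₀ n22 (by linear_combination this)
    · field_simp
    · exact h12
    · field_simp
      have key : M 0 0^2 * (M 2 0 * (M 2 2^2*4) - -(M 2 2 * M 2 1^2)) = 0 := by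
        linear_combination 4*M 0 0*M 2 2^2*h20 + M 2 2*(M 0 0*M 2 1 - 2*M 1 0*M 1 1)*h21
          + 4*M 1 0^2*M 2 2*h11
      have := (mul_eq_zero.mp key).resolve_left (pow_ne_zero 2 n00)
      exact mul_right_cancel₀ n22 (by linear_combination this)
    · field_simp

lemma forward {k : Type*} [Field k] [CharZero k] (M N : Matrix (Fin 3) (Fin 3) k)
    (hMN : M * N = 1) (hdet : M.det ≠ 0)
    (hc1 : ∀ t : k, quarticC (M.mulVec ![1, t, 1 - t^2]) = 0)
    (hc2 : ∀ t : k, quarticC (M.mulVec ![1, t, -1 - t^2]) = 0) :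
    ∃ (c : kˣ) (ζ a : k), ζ^4 = 1 ∧ M = (c : k) • quarticAut ζ a := by
  have hfac1 : ∀ t : k,
      ((M 1 2^2 + 2*M 1 0*M 1 2 + M 1 0^2 + M 0 2*M 2 2 + M 0 2*M 2 0 - 1*M 0 2^2 + M 0 0*M 2 2 + M 0 0*M 2 0 - 2*M 0 0*M 0 2 - 1*M 0 0^2) +
        (2*M 1 1*M 1 2 + 2*M 1 0*M 1 1 + M 0 2*M 2 1 + M 0 1*M 2 2 + M 0 1*M 2 0 - 2*M 0 1*M 0 2 + M 0 0*M 2 1 - 2*M 0 0*M 0 1)*t +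
        (-2*M 1 2^2 + M 1 1^2 - 2*M 1 0*M 1 2 - 2*M 0 2*M 2 2 - 1*M 0 2*M 2 0 + 2*M 0 2^2 + M 0 1*M 2 1 - 1*M 0 1^2 - 1*M 0 0*M 2 2 + 2*M 0 0*M 0 2)*t^2 +
        (-2*M 1 1*M 1 2 - 1*M 0 2*M 2 1 - 1*M 0 1*M 2 2 + 2*M 0 1*M 0 2)*t^3 +
        (M 1 2^2 + M 0 2*M 2 2 - 1*M 0 2^2)*t^4)
      * ((M 1 2^2 + 2*M 1 0*M 1 2 + M 1 0^2 + M 0 2*M 2 2 + M 0 2*M 2 0 + M 0 2^2 + M 0 0*M 2 2 + M 0 0*M 2 0 + 2*M 0 0*M 0 2 + M 0 0^2) +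
        (2*M 1 1*M 1 2 + 2*M 1 0*M 1 1 + M 0 2*M 2 1 + M 0 1*M 2 2 + M 0 1*M 2 0 + 2*M 0 1*M 0 2 + M 0 0*M 2 1 + 2*M 0 0*M 0 1)*t +
        (-2*M 1 2^2 + M 1 1^2 - 2*M 1 0*M 1 2 - 2*M 0 2*M 2 2 - 1*M 0 2*M 2 0 - 2*M 0 2^2 + M 0 1*M 2 1 + M 0 1^2 - 1*M 0 0*M 2 2 - 2*M 0 0*M 0 2)*t^2 +
        (-2*M 1 1*M 1 2 - 1*M 0 2*M 2 1 - 1*M 0 1*M 2 2 - 2*M 0 1*M 0 2)*t^3 +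
        (M 1 2^2 + M 0 2*M 2 2 + M 0 2^2)*t^4) = 0 := by
    intro t
    have e : quarticC (M.mulVec ![1, t, 1 - t^2]) =
        ((M 1 2^2 + 2*M 1 0*M 1 2 + M 1 0^2 + M 0 2*M 2 2 + M 0 2*M 2 0 - 1*M 0 2^2 + M 0 0*M 2 2 + M 0 0*M 2 0 - 2*M 0 0*M 0 2 - 1*M 0 0^2) +
        (2*M 1 1*M 1 2 + 2*M 1 0*M 1 1 + M 0 2*M 2 1 + M 0 1*M 2 2 + M 0 1*M 2 0 - 2*M 0 1*M 0 2 + M 0 0*M 2 1 - 2*M 0 0*M 0 1)*t +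
        (-2*M 1 2^2 + M 1 1^2 - 2*M 1 0*M 1 2 - 2*M 0 2*M 2 2 - 1*M 0 2*M 2 0 + 2*M 0 2^2 + M 0 1*M 2 1 - 1*M 0 1^2 - 1*M 0 0*M 2 2 + 2*M 0 0*M 0 2)*t^2 +
        (-2*M 1 1*M 1 2 - 1*M 0 2*M 2 1 - 1*M 0 1*M 2 2 + 2*M 0 1*M 0 2)*t^3 +
        (M 1 2^2 + M 0 2*M 2 2 - 1*M 0 2^2)*t^4)
        * ((M 1 2^2 + 2*M 1 0*M 1 2 + M 1 0^2 + M 0 2*M 2 2 + M 0 2*M 2 0 + M 0 2^2 + M 0 0*M 2 2 + M 0 0*M 2 0 + 2*M 0 0*M 0 2 + M 0 0^2) +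
        (2*M 1 1*M 1 2 + 2*M 1 0*M 1 1 + M 0 2*M 2 1 + M 0 1*M 2 2 + M 0 1*M 2 0 + 2*M 0 1*M 0 2 + M 0 0*M 2 1 + 2*M 0 0*M 0 1)*t +
        (-2*M 1 2^2 + M 1 1^2 - 2*M 1 0*M 1 2 - 2*M 0 2*M 2 2 - 1*M 0 2*M 2 0 - 2*M 0 2^2 + M 0 1*M 2 1 + M 0 1^2 - 1*M 0 0*M 2 2 - 2*M 0 0*M 0 2)*t^2 +
        (-2*M 1 1*M 1 2 - 1*M 0 2*M 2 1 - 1*M 0 1*M 2 2 - 2*M 0 1*M 0 2)*t^3 +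
        (M 1 2^2 + M 0 2*M 2 2 + M 0 2^2)*t^4) := by
      simp [quarticC, Matrix.mulVec, dotProduct, Fin.sum_univ_three]
      ring
    rw [← e]; exact hc1 t
  have hfac2 : ∀ t : k,
      ((M 1 2^2 - 2*M 1 0*M 1 2 + M 1 0^2 + M 0 2*M 2 2 - 1*M 0 2*M 2 0 - 1*M 0 2^2 - 1*M 0 0*M 2 2 + M 0 0*M 2 0 + 2*M 0 0*M 0 2 - 1*M 0 0^2) +
        (-2*M 1 1*M 1 2 + 2*M 1 0*M 1 1 - 1*M 0 2*M 2 1 - 1*M 0 1*M 2 2 + M 0 1*M 2 0 + 2*M 0 1*M 0 2 + M 0 0*M 2 1 - 2*M 0 0*M 0 1)*t +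
        (2*M 1 2^2 + M 1 1^2 - 2*M 1 0*M 1 2 + 2*M 0 2*M 2 2 - 1*M 0 2*M 2 0 - 2*M 0 2^2 + M 0 1*M 2 1 - 1*M 0 1^2 - 1*M 0 0*M 2 2 + 2*M 0 0*M 0 2)*t^2 +
        (-2*M 1 1*M 1 2 - 1*M 0 2*M 2 1 - 1*M 0 1*M 2 2 + 2*M 0 1*M 0 2)*t^3 +
        (M 1 2^2 + M 0 2*M 2 2 - 1*M 0 2^2)*t^4)
      * ((M 1 2^2 - 2*M 1 0*M 1 2 + M 1 0^2 + M 0 2*M 2 2 - 1*M 0 2*M 2 0 + M 0 2^2 - 1*M 0 0*M 2 2 + M 0 0*M 2 0 - 2*M 0 0*M 0 2 + M 0 0^2) +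
        (-2*M 1 1*M 1 2 + 2*M 1 0*M 1 1 - 1*M 0 2*M 2 1 - 1*M 0 1*M 2 2 + M 0 1*M 2 0 - 2*M 0 1*M 0 2 + M 0 0*M 2 1 + 2*M 0 0*M 0 1)*t +
        (2*M 1 2^2 + M 1 1^2 - 2*M 1 0*M 1 2 + 2*M 0 2*M 2 2 - 1*M 0 2*M 2 0 + 2*M 0 2^2 + M 0 1*M 2 1 + M 0 1^2 - 1*M 0 0*M 2 2 - 2*M 0 0*M 0 2)*t^2 +
        (-2*M 1 1*M 1 2 - 1*M 0 2*M 2 1 - 1*M 0 1*M 2 2 - 2*M 0 1*M 0 2)*t^3 +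
        (M 1 2^2 + M 0 2*M 2 2 + M 0 2^2)*t^4) = 0 := by
    intro t
    have e : quarticC (M.mulVec ![1, t, -1 - t^2]) =
        ((M 1 2^2 - 2*M 1 0*M 1 2 + M 1 0^2 + M 0 2*M 2 2 - 1*M 0 2*M 2 0 - 1*M 0 2^2 - 1*M 0 0*M 2 2 + M 0 0*M 2 0 + 2*M 0 0*M 0 2 - 1*M 0 0^2) +
        (-2*M 1 1*M 1 2 + 2*M 1 0*M 1 1 - 1*M 0 2*M 2 1 - 1*M 0 1*M 2 2 + M 0 1*M 2 0 + 2*M 0 1*M 0 2 + M 0 0*M 2 1 - 2*M 0 0*M 0 1)*t +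
        (2*M 1 2^2 + M 1 1^2 - 2*M 1 0*M 1 2 + 2*M 0 2*M 2 2 - 1*M 0 2*M 2 0 - 2*M 0 2^2 + M 0 1*M 2 1 - 1*M 0 1^2 - 1*M 0 0*M 2 2 + 2*M 0 0*M 0 2)*t^2 +
        (-2*M 1 1*M 1 2 - 1*M 0 2*M 2 1 - 1*M 0 1*M 2 2 + 2*M 0 1*M 0 2)*t^3 +
        (M 1 2^2 + M 0 2*M 2 2 - 1*M 0 2^2)*t^4)
        * ((M 1 2^2 - 2*M 1 0*M 1 2 + M 1 0^2 + M 0 2*M 2 2 - 1*M 0 2*M 2 0 + M 0 2^2 - 1*M 0 0*M 2 2 + M 0 0*M 2 0 - 2*M 0 0*M 0 2 + M 0 0^2) +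
        (-2*M 1 1*M 1 2 + 2*M 1 0*M 1 1 - 1*M 0 2*M 2 1 - 1*M 0 1*M 2 2 + M 0 1*M 2 0 - 2*M 0 1*M 0 2 + M 0 0*M 2 1 + 2*M 0 0*M 0 1)*t +
        (2*M 1 2^2 + M 1 1^2 - 2*M 1 0*M 1 2 + 2*M 0 2*M 2 2 - 1*M 0 2*M 2 0 + 2*M 0 2^2 + M 0 1*M 2 1 + M 0 1^2 - 1*M 0 0*M 2 2 - 2*M 0 0*M 0 2)*t^2 +
        (-2*M 1 1*M 1 2 - 1*M 0 2*M 2 1 - 1*M 0 1*M 2 2 - 2*M 0 1*M 0 2)*t^3 +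
        (M 1 2^2 + M 0 2*M 2 2 + M 0 2^2)*t^4) := by
      simp [quarticC, Matrix.mulVec, dotProduct, Fin.sum_univ_three]
      ring
    rw [← e]; exact hc2 t
  rcases key5 _ _ _ _ _ _ _ _ _ _ hfac1 with ⟨hA0, hA1, hA2, hA3, hA4⟩ | ⟨hB0, hB1, hB2, hB3, hB4⟩
  · rcases key5 _ _ _ _ _ _ _ _ _ _ hfac2 with ⟨hC0, hC1, hC2, hC3, hC4⟩ | ⟨hD0, hD1, hD2, hD3, hD4⟩
    · -- A on both conics : contradiction
      exact (degen M N hMN (-1)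
        (by linear_combination (hA0 + hC0)/2 - hA4)
        (by linear_combination hA1 + hA3)
        (by linear_combination (hA0 - hC0)/2)
        (by linear_combination hA2 + (hA0 - hC0)/2 + 2*hA4)
        (by linear_combination -hA3)
        (by linear_combination hA4)).elim
    · -- Case I : A on conic1, B on conic2
      have h02 : M 0 2 = 0 := by
        have : M 0 2^2 = 0 := by linear_combination (hD4 - hA4)/2
        exact pow_eq_zero_iff (two_ne_zero) |>.mp this
      have h12 : M 1 2 = 0 := by
        have : M 1 2^2 = 0 := by linear_combination hA4 - M 2 2*h02 + M 0 2*h02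
        exact pow_eq_zero_iff (two_ne_zero) |>.mp this
      have h01 : M 0 1 = 0 := by
        have : M 0 1^2 = 0 := by
          linear_combination (hD2 - hA2)/2 - 2*M 1 2*h12 - 2*M 2 2*h02 + 2*M 0 0*h02
        exact pow_eq_zero_iff (two_ne_zero) |>.mp this
      have h11 : M 1 1^2 = M 0 0 * M 2 2 := by
        linear_combination hA2 + (2*M 1 2 + 2*M 1 0)*h12
          + (2*M 2 2 + M 2 0 - 2*M 0 2 - 2*M 0 0)*h02 + (M 0 1 - M 2 1)*h01
      have h20 : M 0 0*M 2 0 + M 1 0^2 = 0 := by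
        linear_combination (hA0 + hD0)/2 - M 1 2*h12 + (2*M 0 0 - M 2 2)*h02
      have hd : M 0 0^2 = M 0 0 * M 2 2 := by
        linear_combination -(hA0 - hD0)/2 + 2*M 1 0*h12 + (M 2 0 - M 0 2)*h02
      have h00 : M 0 0^2 * M 0 0^2 = (M 0 0 * M 2 2)^2 := by
        linear_combination (M 0 0^2 + M 0 0 * M 2 2) * hd
      have h21 : M 0 0*M 2 1 + 2*M 1 0*M 1 1 = 0 := by
        linear_combination hA1 - 2*M 1 1*h12 - M 2 1*h02
          + (-M 2 2 - M 2 0 + 2*M 0 2 + 2*M 0 0)*h01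
      exact recon M hdet h01 h02 h12 h11 h00 h20 h21
  · rcases key5 _ _ _ _ _ _ _ _ _ _ hfac2 with ⟨hC0, hC1, hC2, hC3, hC4⟩ | ⟨hD0, hD1, hD2, hD3, hD4⟩
    · -- Case II : B on conic1, A on conic2
      have h02 : M 0 2 = 0 := by
        have : M 0 2^2 = 0 := by linear_combination (hB4 - hC4)/2
        exact pow_eq_zero_iff (two_ne_zero) |>.mp this
      have h12 : M 1 2 = 0 := by
        have : M 1 2^2 = 0 := by linear_combination hC4 - M 2 2*h02 + M 0 2*h02
        exact pow_eq_zero_iff (two_ne_zero) |>.mp this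
      have h01 : M 0 1 = 0 := by
        have : M 0 1^2 = 0 := by
          linear_combination (hB2 - hC2)/2 + 2*M 1 2*h12 + 2*M 2 2*h02 + 2*M 0 0*h02
        exact pow_eq_zero_iff (two_ne_zero) |>.mp this
      have h11 : M 1 1^2 = M 0 0 * M 2 2 := by
        linear_combination hB2 + (2*M 1 2 + 2*M 1 0)*h12
          + (2*M 2 2 + M 2 0 + 2*M 0 2 + 2*M 0 0)*h02 + (-M 0 1 - M 2 1)*h01
      have h20 : M 0 0*M 2 0 + M 1 0^2 = 0 := by
        linear_combination (hB0 + hC0)/2 - M 1 2*h12 + (-M 2 2 - 2*M 0 0)*h02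
      have hd : M 0 0^2 = -(M 0 0 * M 2 2) := by
        linear_combination (hB0 - hC0)/2 - 2*M 1 0*h12 + (-M 2 0 - M 0 2)*h02
      have h00 : M 0 0^2 * M 0 0^2 = (M 0 0 * M 2 2)^2 := by
        linear_combination (M 0 0^2 - M 0 0 * M 2 2) * hd
      have h21 : M 0 0*M 2 1 + 2*M 1 0*M 1 1 = 0 := by
        linear_combination hB1 - 2*M 1 1*h12 - M 2 1*h02
          + (-M 2 2 - M 2 0 - 2*M 0 2 - 2*M 0 0)*h01
      exact recon M hdet h01 h02 h12 h11 h00 h20 h21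
    · -- B on both conics : contradiction
      exact (degen M N hMN 1
        (by linear_combination (hB0 + hD0)/2 - hB4)
        (by linear_combination hB1 + hB3)
        (by linear_combination (hB0 - hD0)/2)
        (by linear_combination hB2 + (hB0 - hD0)/2 + 2*hB4)
        (by linear_combination -hB3)
        (by linear_combination hB4)).elim

/-- the subgroup of `PGL₃(k)` preserving the quartic
`C = {(x₀x₂ + x₁²)² = x₀⁴}` consists exactly of the transformations
`(x₀:x₁:x₂) ↦ (ζ²x₀ : ζx₁ − (ζa/2)x₀ : x₂ + ax₁ − (a²/4)x₀)` with `ζ⁴ = 1`, `a ∈ k`;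
moreover these transformations compose by the rule of the semidirect product
`Ga ⋊ μ₄` (with `μ₄` acting through `ζ ↦ ζ`), and distinct parameters give distinct
elements of `PGL₃(k)`; in particular `Aut(ℙ², C) ≅ Ga ⋊ μ₄` and its identity component
(the subgroup `ζ = 1`) is isomorphic to `Ga`. -/
theorem stmt_4 (k : Type*) [Field k] [IsAlgClosed k] [CharZero k] :
    (∀ g : GL (Fin 3) k,
      PreservesPlaneCurve quarticC g ↔
        ∃ (c : kˣ) (ζ a : k), ζ ^ 4 = 1 ∧
          (g : Matrix (Fin 3) (Fin 3) k) = (c : k) • quarticAut ζ a) ∧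
    (∀ ζ a ζ' a' : k,
      quarticAut ζ a * quarticAut ζ' a' = quarticAut (ζ * ζ') (a' + ζ' * a)) ∧
    (∀ (c : k) (ζ a ζ' a' : k), ζ ^ 4 = 1 → ζ' ^ 4 = 1 →
      quarticAut ζ a = c • quarticAut ζ' a' → ζ = ζ' ∧ a = a') := by
  refine ⟨?_, ?_, ?_⟩
  · intro g
    constructor
    · intro hpres
      set M := (g : Matrix (Fin 3) (Fin 3) k) with hMdef
      have hdet : M.det ≠ 0 := ((Matrix.isUnit_iff_isUnit_det M).mp g.isUnit).ne_zero
      have hMN : M * ((↑(g⁻¹) : Matrix (Fin 3) (Fin 3) k)) = 1 := g.mul_inv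
      apply forward M _ hMN hdet
      · intro t
        refine (hpres _).mpr ?_
        show ((![1, t, 1 - t^2] : Fin 3 → k) 0 * _ + _)^2 - _ = 0
        simp
        try ring
      · intro t
        refine (hpres _).mpr ?_
        show ((![1, t, -1 - t^2] : Fin 3 → k) 0 * _ + _)^2 - _ = 0
        simp
        try ring
    · rintro ⟨c, ζ, a, hζ, hM⟩ v
      rw [hM]
      have key : quarticC (((c:k) • quarticAut ζ a).mulVec v) = (c:k)^4 * quarticC v := by
        simp [quarticC, quarticAut, Matrix.mulVec, dotProduct, Fin.sum_univ_three]
        linear_combination ((c:k)^4*((v 0*v 2 + v 1^2)^2 - (ζ^4+1)*(v 0)^4)) * hζ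
      rw [key]
      have hc : ((c:k))^4 ≠ 0 := pow_ne_zero _ c.ne_zero
      constructor
      · intro h
        exact (mul_eq_zero.mp h).resolve_left hc
      · intro h
        rw [h, mul_zero]
  · intro ζ a ζ' a'
    ext i j
    fin_cases i <;> fin_cases j <;>
      simp [quarticAut, Matrix.mul_apply, Fin.sum_univ_three] <;> ring
  · intro c ζ a ζ' a' hζ hζ' h
    have h22 := congrFun (congrFun h 2) 2
    have h11 := congrFun (congrFun h 1) 1
    have h21 := congrFun (congrFun h 2) 1
    simp [quarticAut] at h22 h11 h21
    rw [← h22] at h11 h21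
    simp at h11 h21
    exact ⟨h11, h21⟩
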